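/- The 6×3 Kalman matrix obtained by stacking C, CA, CA² on top of each other, which equals the matrix with rows (0,1,0), (0,0,1), (k₁,0,0), (k₂,0,0), (−k₁(k₁+k₂),0,0), (−k₂(k₁+k₂),0,0), has rank 3 if and only if k₁ ≠ 0 or k₂ ≠ 0. -/

import Mathlib

open Matrix Set
open scoped Matrix

noncomputable section

/-- for the toy model, the 6×3 Kalman matrix obtained by stacking
`C, CA, CA²` equals the explicit matrix with rows `(0,1,0)`, `(0,0,1)`, `(k₁,0,0)`,
`(k₂,0,0)`, `(−k₁(k₁+k₂),0,0)`, `(−k₂(k₁+k₂),0,0)`, and it has rank 3 iff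
`k₁ ≠ 0` or `k₂ ≠ 0`. -/
theorem statement5
    (k₁ k₂ : ℝ)
    (A : Matrix (Fin 3) (Fin 3) ℝ)
    (hA : A = !![-(k₁ + k₂), 0, 0; k₁, 0, 0; k₂, 0, 0])
    (C : Matrix (Fin 2) (Fin 3) ℝ)
    (hC : C = !![0, 1, 0; 0, 0, 1])
    (K : Matrix (Fin 6) (Fin 3) ℝ)
    (hK : ∀ (j : Fin 3) (i : Fin 2) (k : Fin 3),
      K ⟨2 * (j : ℕ) + (i : ℕ), by have := j.2; have := i.2; omega⟩ k
        = (C * A ^ (j : ℕ)) i k) :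
    K = !![0, 1, 0; 0, 0, 1; k₁, 0, 0; k₂, 0, 0;
           -(k₁ * (k₁ + k₂)), 0, 0; -(k₂ * (k₁ + k₂)), 0, 0]
    ∧ (K.rank = 3 ↔ (k₁ ≠ 0 ∨ k₂ ≠ 0)) := by
  subst hA hC
  have e0 : ∀ c, K 0 c = ![(0:ℝ),1,0] c := fun c => (hK 0 0 c).trans (by
    fin_cases c <;> simp [Matrix.mul_apply, Matrix.one_apply, Fin.sum_univ_succ])
  have e1 : ∀ c, K 1 c = ![(0:ℝ),0,1] c := fun c => (hK 0 1 c).trans (by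
    fin_cases c <;> simp [Matrix.mul_apply, Matrix.one_apply, Fin.sum_univ_succ])
  have e2 : ∀ c, K 2 c = ![k₁,0,0] c := fun c => (hK 1 0 c).trans (by
    fin_cases c <;> simp [Matrix.mul_apply, Fin.sum_univ_succ, pow_succ])
  have e3 : ∀ c, K 3 c = ![k₂,0,0] c := fun c => (hK 1 1 c).trans (by
    fin_cases c <;> simp [Matrix.mul_apply, Fin.sum_univ_succ, pow_succ])
  have e4 : ∀ c, K 4 c = ![-(k₁*(k₁+k₂)),0,0] c := fun c => (hK 2 0 c).trans (by
    fin_cases c <;> (simp [Matrix.mul_apply, Fin.sum_univ_succ, pow_succ]; try ring))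
  have e5 : ∀ c, K 5 c = ![-(k₂*(k₁+k₂)),0,0] c := fun c => (hK 2 1 c).trans (by
    fin_cases c <;> (simp [Matrix.mul_apply, Fin.sum_univ_succ, pow_succ]; try ring))
  have hKeq : K = !![0, 1, 0; 0, 0, 1; k₁, 0, 0; k₂, 0, 0;
           -(k₁ * (k₁ + k₂)), 0, 0; -(k₂ * (k₁ + k₂)), 0, 0] := by
    ext r c
    fin_cases r
    · exact (e0 c).trans (by fin_cases c <;> rfl)
    · exact (e1 c).trans (by fin_cases c <;> rfl)
    · exact (e2 c).trans (by fin_cases c <;> rfl)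
    · exact (e3 c).trans (by fin_cases c <;> rfl)
    · exact (e4 c).trans (by fin_cases c <;> rfl)
    · exact (e5 c).trans (by fin_cases c <;> rfl)
  refine ⟨hKeq, ?_⟩
  have hrank : K.rank = 3 ↔ LinearMap.ker K.mulVecLin = ⊥ := by
    constructor
    · intro h
      rw [← Submodule.finrank_eq_zero (R := ℝ)]
      have hrn := K.mulVecLin.finrank_range_add_finrank_ker
      rw [Matrix.rank] at h
      simp only [h] at hrn
      have : Module.finrank ℝ (Fin 3 → ℝ) = 3 := by simp
      omega
    · intro h
      have hinj : Function.Injective K.mulVecLin := LinearMap.ker_eq_bot.mp h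
      rw [Matrix.rank, LinearMap.finrank_range_of_inj hinj]
      simp
  rw [hrank, hKeq]
  constructor
  · intro h
    by_contra hcon
    push_neg at hcon
    obtain ⟨h1, h2⟩ := hcon
    subst h1; subst h2
    have : (![1,0,0] : Fin 3 → ℝ) ∈ LinearMap.ker
        (!![(0:ℝ), 1, 0; 0, 0, 1; 0, 0, 0; 0, 0, 0;
           -(0 * (0 + 0)), 0, 0; -(0 * (0 + 0)), 0, 0]).mulVecLin := by
      simp only [LinearMap.mem_ker, Matrix.mulVecLin_apply]
      norm_num [Matrix.cons_mulVec, Matrix.cons_dotProduct, Matrix.cons_eq_zero_iff]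
      ext i
      fin_cases i <;> rfl
    rw [h] at this
    simp only [Submodule.mem_bot] at this
    have := congrFun this 0
    norm_num at this
  · intro h
    rw [LinearMap.ker_eq_bot']
    intro v hv
    simp only [Matrix.mulVecLin_apply] at hv
    have h0 := congrFun hv 0
    have h1 := congrFun hv 1
    have h2 := congrFun hv 2
    have h3 := congrFun hv 3
    simp [Matrix.mulVec, dotProduct, Fin.sum_univ_succ] at h0 h1 h2 h3
    ext i
    fin_cases i
    · rcases h with h | h
      · simp only [Pi.zero_apply]
        rcases h2 with h2 | h2
        · exact absurd h2 h
        · exact h2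
      · simp only [Pi.zero_apply]
        rcases h3 with h3 | h3
        · exact absurd h3 h
        · exact h3
    · simpa using h0
    · simpa using h1
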